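/- Fix τ ≥ 1 and k > τ + 1. For each C > 0 define B_{C,k} := {α ∈ ℝ : |α - p/q^τ| ≥ C/q^k for all p ∈ ℤ and q ∈ ℕ}. Then the complement of the union ∪_{C>0} B_{C,k} has Lebesgue measure zero. Equivalently, for almost every α ∈ ℝ there exists C > 0 such that |α - p/q^τ| ≥ C/q^k for all rationals p/q. -/

import Mathlib

open Set MeasureTheory

/-- the set of α that are C/q^k-far from all numbers p/q^τ -/
noncomputable def Bset (τ C k : ℝ) : Set ℝ :=
  {α : ℝ | ∀ (p : ℤ) (q : ℕ), 0 < q → C / (q : ℝ) ^ k ≤ |α - (p : ℝ) / (q : ℝ) ^ τ|}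

lemma cover_lemma (τ k C : ℝ) (hτ : 1 ≤ τ) (hk : τ + 1 < k) (hC : 0 < C) (hC1 : C ≤ 1)
    (N : ℕ) :
    (⋃ C ∈ Set.Ioi (0:ℝ), Bset τ C k)ᶜ ∩ Icc (-(N:ℝ)) N ⊆
    ⋃ q : ℕ, ⋃ p ∈ (Finset.Icc (-⌈((N:ℝ)+1) * (q:ℝ)^τ⌉) ⌈((N:ℝ)+1) * (q:ℝ)^τ⌉ : Finset ℤ),
      Metric.ball ((p:ℝ)/(q:ℝ)^τ) (C/(q:ℝ)^k) := by
  rintro α ⟨hα, hαN⟩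
  have hαabs : |α| ≤ (N:ℝ) := abs_le.2 ⟨hαN.1, hαN.2⟩
  have hnot : α ∉ Bset τ C k := by
    intro hmem
    exact hα (mem_biUnion (mem_Ioi.2 hC) hmem)
  simp only [Bset, mem_setOf_eq, not_forall] at hnot
  obtain ⟨p, q, hq, hlt⟩ := hnot
  push_neg at hlt
  have hq1 : (1:ℝ) ≤ (q:ℝ) := by exact_mod_cast hq
  have hq0 : (0:ℝ) < (q:ℝ) := by linarith
  have hqτ : (1:ℝ) ≤ (q:ℝ)^τ := Real.one_le_rpow hq1 (by linarith)
  have hqk : (1:ℝ) ≤ (q:ℝ)^k := Real.one_le_rpow hq1 (by linarith)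
  have hr1 : C/(q:ℝ)^k ≤ 1 := by
    rw [div_le_one (by linarith)]; linarith
  have hpbound : |(p:ℝ)| ≤ ((N:ℝ)+1) * (q:ℝ)^τ := by
    have h1 : |(p:ℝ)/(q:ℝ)^τ| ≤ (N:ℝ)+1 := by
      have := abs_sub_abs_le_abs_sub ((p:ℝ)/(q:ℝ)^τ) α
      have habs : |(p:ℝ)/(q:ℝ)^τ - α| = |α - (p:ℝ)/(q:ℝ)^τ| := abs_sub_comm _ _
      rw [habs] at this
      linarith [hlt.trans_le hr1]
    rw [abs_div, abs_of_pos (by linarith : (0:ℝ) < (q:ℝ)^τ), div_le_iff₀ (by linarith)] at h1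
    linarith [mul_le_mul_of_nonneg_right h1 (le_of_lt (by linarith : (0:ℝ) < (q:ℝ)^τ))]
  have hpmem : p ∈ (Finset.Icc (-⌈((N:ℝ)+1) * (q:ℝ)^τ⌉) ⌈((N:ℝ)+1) * (q:ℝ)^τ⌉ : Finset ℤ) := by
    rw [Finset.mem_Icc]
    have hceil : ((N:ℝ)+1) * (q:ℝ)^τ ≤ (⌈((N:ℝ)+1) * (q:ℝ)^τ⌉ : ℝ) := Int.le_ceil _
    constructor
    · have : -(⌈((N:ℝ)+1) * (q:ℝ)^τ⌉ : ℝ) ≤ (p:ℝ) := by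
        have := (abs_le.1 hpbound).1; linarith
      exact_mod_cast this
    · have : (p:ℝ) ≤ (⌈((N:ℝ)+1) * (q:ℝ)^τ⌉ : ℝ) := by
        have := (abs_le.1 hpbound).2; linarith
      exact_mod_cast this
  refine mem_iUnion.2 ⟨q, mem_biUnion hpmem ?_⟩
  rw [Metric.mem_ball, Real.dist_eq]
  exact hlt

lemma meas_bound (τ k C : ℝ) (hτ : 1 ≤ τ) (hk : τ + 1 < k) (hC : 0 < C) (N : ℕ) :
    volume (⋃ q : ℕ, ⋃ p ∈ (Finset.Icc (-⌈((N:ℝ)+1) * (q:ℝ)^τ⌉) ⌈((N:ℝ)+1) * (q:ℝ)^τ⌉ : Finset ℤ),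
      Metric.ball ((p:ℝ)/(q:ℝ)^τ) (C/(q:ℝ)^k))
    ≤ ENNReal.ofReal ((C * ((2*(N:ℝ)+5)*2)) * ∑' q : ℕ, (q:ℝ)^(τ - k)) := by
  have hsum : Summable (fun q : ℕ => (q:ℝ)^(τ - k)) :=
    Real.summable_nat_rpow.mpr (by linarith)
  have hterm : ∀ q : ℕ,
      volume (⋃ p ∈ (Finset.Icc (-⌈((N:ℝ)+1) * (q:ℝ)^τ⌉) ⌈((N:ℝ)+1) * (q:ℝ)^τ⌉ : Finset ℤ),
        Metric.ball ((p:ℝ)/(q:ℝ)^τ) (C/(q:ℝ)^k))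
      ≤ ENNReal.ofReal ((C * ((2*(N:ℝ)+5)*2)) * (q:ℝ)^(τ - k)) := by
    intro q
    rcases Nat.eq_zero_or_pos q with hq | hq
    · subst hq
      have h0 : ((0:ℕ):ℝ)^k = 0 := by
        rw [Nat.cast_zero]; exact Real.zero_rpow (by intro h; rw [h] at hk; linarith)
      have hball : ∀ p : ℤ, Metric.ball ((p:ℝ)/((0:ℕ):ℝ)^τ) (C/((0:ℕ):ℝ)^k) = ∅ := by
        intro p
        rw [h0, div_zero]
        exact Metric.ball_zero
      simp only [hball]
      simp
    · have hq1 : (1:ℝ) ≤ (q:ℝ) := by exact_mod_cast hq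
      have hq0 : (0:ℝ) < (q:ℝ) := by linarith
      have hqτ : (1:ℝ) ≤ (q:ℝ)^τ := Real.one_le_rpow hq1 (by linarith)
      have hqk0 : (0:ℝ) < (q:ℝ)^k := Real.rpow_pos_of_pos hq0 k
      set M := ⌈((N:ℝ)+1) * (q:ℝ)^τ⌉ with hM
      have hM0 : 0 ≤ M := Int.ceil_nonneg (by positivity)
      calc volume (⋃ p ∈ (Finset.Icc (-M) M : Finset ℤ),
              Metric.ball ((p:ℝ)/(q:ℝ)^τ) (C/(q:ℝ)^k))
          ≤ ∑ p ∈ (Finset.Icc (-M) M : Finset ℤ), volume (Metric.ball ((p:ℝ)/(q:ℝ)^τ) (C/(q:ℝ)^k)) :=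
            measure_biUnion_finset_le _ _
        _ = (Finset.Icc (-M) M).card • ENNReal.ofReal (2 * (C/(q:ℝ)^k)) := by
            simp [Real.volume_ball]
        _ ≤ ENNReal.ofReal ((C * ((2*(N:ℝ)+5)*2)) * (q:ℝ)^(τ - k)) := by
            rw [Int.card_Icc]
            have hcardZ : ((M + 1 - (-M)).toNat : ℤ) = 2*M+1 := by omega
            have hcard : (((M + 1 - (-M)).toNat : ℕ) : ℝ) ≤ 2*(M:ℝ) + 1 := by
              exact_mod_cast hcardZ.le
            have hMle : (M:ℝ) ≤ ((N:ℝ)+1) * (q:ℝ)^τ + 1 := le_of_lt (Int.ceil_lt_add_one _)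
            have hfin : (2*(M:ℝ)+1) * (2 * (C/(q:ℝ)^k)) ≤ (C * ((2*(N:ℝ)+5)*2)) * (q:ℝ)^(τ - k) := by
              have hrw : (q:ℝ)^(τ - k) = (q:ℝ)^τ / (q:ℝ)^k := Real.rpow_sub hq0 τ k ▸ rfl
              rw [hrw]
              rw [div_eq_mul_inv, div_eq_mul_inv]
              have hinv : (0:ℝ) < ((q:ℝ)^k)⁻¹ := by positivity
              have key : (2*(M:ℝ)+1) ≤ (2*(N:ℝ)+5) * (q:ℝ)^τ := by nlinarith
              nlinarith [mul_le_mul_of_nonneg_right key (le_of_lt hinv), hC.le]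
            calc (M + 1 - -M).toNat • ENNReal.ofReal (2 * (C/(q:ℝ)^k))
                = ENNReal.ofReal (((M + 1 - (-M)).toNat : ℝ) * (2 * (C/(q:ℝ)^k))) := by
                  rw [nsmul_eq_mul, ← ENNReal.ofReal_natCast, ← ENNReal.ofReal_mul (by positivity)]
              _ ≤ ENNReal.ofReal ((C * ((2*(N:ℝ)+5)*2)) * (q:ℝ)^(τ - k)) := by
                  apply ENNReal.ofReal_le_ofReal
                  calc ((M + 1 - (-M)).toNat : ℝ) * (2 * (C/(q:ℝ)^k))
                      ≤ (2*(M:ℝ)+1) * (2 * (C/(q:ℝ)^k)) := by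
                        apply mul_le_mul_of_nonneg_right hcard (by positivity)
                    _ ≤ _ := hfin
  calc volume (⋃ q : ℕ, ⋃ p ∈ (Finset.Icc (-⌈((N:ℝ)+1) * (q:ℝ)^τ⌉) ⌈((N:ℝ)+1) * (q:ℝ)^τ⌉ : Finset ℤ),
        Metric.ball ((p:ℝ)/(q:ℝ)^τ) (C/(q:ℝ)^k))
      ≤ ∑' q : ℕ, volume (⋃ p ∈ (Finset.Icc (-⌈((N:ℝ)+1) * (q:ℝ)^τ⌉) ⌈((N:ℝ)+1) * (q:ℝ)^τ⌉ : Finset ℤ),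
        Metric.ball ((p:ℝ)/(q:ℝ)^τ) (C/(q:ℝ)^k)) := measure_iUnion_le _
    _ ≤ ∑' q : ℕ, ENNReal.ofReal ((C * ((2*(N:ℝ)+5)*2)) * (q:ℝ)^(τ - k)) :=
        ENNReal.tsum_le_tsum hterm
    _ = ENNReal.ofReal (∑' q : ℕ, (C * ((2*(N:ℝ)+5)*2)) * (q:ℝ)^(τ - k)) := by
        rw [ENNReal.ofReal_tsum_of_nonneg (fun q => by positivity) (hsum.mul_left _)]
    _ = ENNReal.ofReal ((C * ((2*(N:ℝ)+5)*2)) * ∑' q : ℕ, (q:ℝ)^(τ - k)) := by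
        rw [tsum_mul_left]

theorem stmt7 (τ k : ℝ) (hτ : 1 ≤ τ) (hk : τ + 1 < k) :
    volume (⋃ C ∈ Set.Ioi (0:ℝ), Bset τ C k)ᶜ = 0 := by
  set E := (⋃ C ∈ Set.Ioi (0:ℝ), Bset τ C k)ᶜ with hE
  have key : ∀ N : ℕ, volume (E ∩ Icc (-(N:ℝ)) N) = 0 := by
    intro N
    set K := ∑' q : ℕ, (q:ℝ)^(τ - k) with hKdef
    have hK0 : 0 ≤ K := tsum_nonneg (fun q => Real.rpow_nonneg q.cast_nonneg _)
    have bound : ∀ C : ℝ, 0 < C → C ≤ 1 →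
        volume (E ∩ Icc (-(N:ℝ)) N) ≤ ENNReal.ofReal ((C * ((2*(N:ℝ)+5)*2)) * K) := by
      intro C hC hC1
      exact (measure_mono (cover_lemma τ k C hτ hk hC hC1 N)).trans
        (meas_bound τ k C hτ hk hC N)
    refine le_antisymm ?_ zero_le
    refine ENNReal.le_of_forall_pos_le_add (fun ε hε _ => ?_)
    rw [zero_add]
    set c : ℝ := ((2*(N:ℝ)+5)*2) * K + 1 with hc
    have hc1 : ((2*(N:ℝ)+5)*2) * K ≤ c := by rw [hc]; linarith
    have hc0 : 0 < c := by positivity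
    set C : ℝ := min ((ε:ℝ)/c) 1 with hCdef
    have hεR : (0:ℝ) < (ε:ℝ) := by exact_mod_cast hε
    have hCpos : 0 < C := lt_min (by positivity) one_pos
    have hCle1 : C ≤ 1 := min_le_right _ _
    have : (C * ((2*(N:ℝ)+5)*2)) * K ≤ (ε:ℝ) := by
      have h1 : C ≤ (ε:ℝ)/c := min_le_left _ _
      have h2 : C * (((2*(N:ℝ)+5)*2) * K) ≤ ((ε:ℝ)/c) * c :=
        mul_le_mul h1 hc1 (mul_nonneg (by positivity) hK0) (div_nonneg hεR.le hc0.le)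
      rw [div_mul_cancel₀ _ (ne_of_gt hc0)] at h2
      linarith [h2]
    calc volume (E ∩ Icc (-(N:ℝ)) N) ≤ ENNReal.ofReal ((C * ((2*(N:ℝ)+5)*2)) * K) :=
          bound C hCpos hCle1
      _ ≤ ENNReal.ofReal (ε:ℝ) := ENNReal.ofReal_le_ofReal this
      _ = (ε : ENNReal) := ENNReal.ofReal_coe_nnreal
  have hcover : E ⊆ ⋃ N : ℕ, E ∩ Icc (-(N:ℝ)) N := by
    intro α hα
    refine mem_iUnion.2 ⟨⌈|α|⌉₊, hα, ?_⟩
    have h1 : |α| ≤ (⌈|α|⌉₊ : ℝ) := Nat.le_ceil _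
    exact ⟨by linarith [(abs_le.1 h1).1, neg_abs_le α], by linarith [le_abs_self α]⟩
  refine le_antisymm ((measure_mono hcover).trans ?_) zero_le
  calc volume (⋃ N : ℕ, E ∩ Icc (-(N:ℝ)) N) ≤ ∑' N : ℕ, volume (E ∩ Icc (-(N:ℝ)) N) :=
        measure_iUnion_le _
    _ = 0 := by simp [key]
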